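/- arXiv:1807.05197 — 4 statements merged into one kernel-verified Lean document; each statement's English description precedes it below -/
import Mathlib

section
/- Let a_1, a_2, a_3, a_4 and x, z, η be complex numbers such that all denominators below are nonzero. Then Σ_{ε=±1} ε · (∏_{ℓ=1}^{4} sinh(x+ε a_ℓ)) / ( sinh(2x) · (ς(x+ε η/2) − ς(z)) ) = Σ_{ε=±1} ε · (∏_{ℓ=1}^{4} sinh(z+ε η/2 − ε a_ℓ)) / ( sinh(2z) · (ς(z+ε η/2) − ς(x)) ) + sinh(a_1+a_2+a_3+a_4 − η). -/
open Complex

noncomputable def ς (z : ℂ) : ℂ := Complex.cosh (2 * z) / 2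

lemma sinh_eq' (w : ℂ) : Complex.sinh w = (Complex.exp w ^ 2 - 1) / (2 * Complex.exp w) := by
  rw [Complex.sinh]
  have h := Complex.exp_ne_zero w
  rw [Complex.exp_neg]
  field_simp

lemma ς_eq (w : ℂ) : ς w = (Complex.exp (2 * w) ^ 2 + 1) / (4 * Complex.exp (2 * w)) := by
  rw [ς, Complex.cosh]
  have h := Complex.exp_ne_zero (2 * w)
  rw [Complex.exp_neg]
  field_simp
  ring

lemma sinh_mul (w : ℂ) : Complex.sinh w * (2 * Complex.exp w) = Complex.exp w ^ 2 - 1 := by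
  rw [sinh_eq', div_mul_cancel₀]
  exact mul_ne_zero two_ne_zero (Complex.exp_ne_zero w)

lemma ς_mul (w : ℂ) : ς w * (4 * Complex.exp (2 * w)) = Complex.exp (2 * w) ^ 2 + 1 := by
  rw [ς_eq, div_mul_cancel₀]
  norm_num [Complex.exp_ne_zero]

lemma sinh_scaled (w t s : ℂ) (h : Complex.exp w * t = s) :
    Complex.sinh w * (2 * (s * t)) = s ^ 2 - t ^ 2 := by
  calc Complex.sinh w * (2 * (s * t))
      = Complex.sinh w * (2 * Complex.exp w) * t ^ 2 := by rw [← h]; ring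
    _ = (Complex.exp w ^ 2 - 1) * t ^ 2 := by rw [sinh_mul]
    _ = (Complex.exp w * t) ^ 2 - t ^ 2 := by ring
    _ = s ^ 2 - t ^ 2 := by rw [h]

lemma sig_scaled (p q tp tq sp sq : ℂ) (hp : Complex.exp (2 * p) * tp = sp)
    (hq : Complex.exp (2 * q) * tq = sq) :
    (ς p - ς q) * (4 * (sp * tp * (sq * tq))) =
      (sp ^ 2 + tp ^ 2) * (sq * tq) - (sq ^ 2 + tq ^ 2) * (sp * tp) := by
  calc (ς p - ς q) * (4 * (sp * tp * (sq * tq)))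
      = ς p * (4 * Complex.exp (2 * p)) * (tp ^ 2 * (Complex.exp (2 * q) * tq ^ 2)) -
          ς q * (4 * Complex.exp (2 * q)) * (tq ^ 2 * (Complex.exp (2 * p) * tp ^ 2)) := by
        rw [← hp, ← hq]; ring
    _ = (Complex.exp (2 * p) ^ 2 + 1) * (tp ^ 2 * (Complex.exp (2 * q) * tq ^ 2)) -
          (Complex.exp (2 * q) ^ 2 + 1) * (tq ^ 2 * (Complex.exp (2 * p) * tp ^ 2)) := by
        rw [ς_mul, ς_mul]
    _ = ((Complex.exp (2 * p) * tp) ^ 2 + tp ^ 2) * ((Complex.exp (2 * q) * tq) * tq) -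
          ((Complex.exp (2 * q) * tq) ^ 2 + tq ^ 2) * ((Complex.exp (2 * p) * tp) * tp) := by
        ring
    _ = _ := by rw [hp, hq]

set_option maxHeartbeats 4000000 in
/-- The `n_a = 4` variable-exchange identity, with the extra constant term
`sinh(a₁+a₂+a₃+a₄ − η)`. -/
theorem exchange_identity_four (a₁ a₂ a₃ a₄ x z η : ℂ)
    (hx : Complex.sinh (2 * x) ≠ 0) (hz : Complex.sinh (2 * z) ≠ 0)
    (hxp : ς (x + η / 2) - ς z ≠ 0) (hxm : ς (x - η / 2) - ς z ≠ 0)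
    (hzp : ς (z + η / 2) - ς x ≠ 0) (hzm : ς (z - η / 2) - ς x ≠ 0) :
    Complex.sinh (x + a₁) * Complex.sinh (x + a₂) * Complex.sinh (x + a₃) *
        Complex.sinh (x + a₄) /
        (Complex.sinh (2 * x) * (ς (x + η / 2) - ς z)) -
      Complex.sinh (x - a₁) * Complex.sinh (x - a₂) * Complex.sinh (x - a₃) *
        Complex.sinh (x - a₄) /
        (Complex.sinh (2 * x) * (ς (x - η / 2) - ς z)) =
    Complex.sinh (z + η / 2 - a₁) * Complex.sinh (z + η / 2 - a₂) *
        Complex.sinh (z + η / 2 - a₃) * Complex.sinh (z + η / 2 - a₄) /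
        (Complex.sinh (2 * z) * (ς (z + η / 2) - ς x)) -
      Complex.sinh (z - η / 2 + a₁) * Complex.sinh (z - η / 2 + a₂) *
        Complex.sinh (z - η / 2 + a₃) * Complex.sinh (z - η / 2 + a₄) /
        (Complex.sinh (2 * z) * (ς (z - η / 2) - ς x)) +
      Complex.sinh (a₁ + a₂ + a₃ + a₄ - η) := by
  rw [div_sub_div _ _ (mul_ne_zero hx hxp) (mul_ne_zero hx hxm),
      div_sub_div _ _ (mul_ne_zero hz hzp) (mul_ne_zero hz hzm),
      div_add' _ _ _ (mul_ne_zero (mul_ne_zero hz hzp) (mul_ne_zero hz hzm)),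
      div_eq_div_iff (mul_ne_zero (mul_ne_zero hx hxp) (mul_ne_zero hx hxm))
        (mul_ne_zero (mul_ne_zero hz hzp) (mul_ne_zero hz hzm))]
  clear hx hz hxp hxm hzp hzm
  obtain ⟨μ, rfl⟩ : ∃ μ, η = 2 * μ := ⟨η / 2, by ring⟩
  have h2 : (2 : ℂ) * μ / 2 = μ := by ring
  rw [h2]
  have Fxp1 : Complex.sinh (x + a₁) * (2 * (Complex.exp x * Complex.exp a₁ * 1)) =
      (Complex.exp x * Complex.exp a₁) ^ 2 - 1 ^ 2 :=
    sinh_scaled _ _ _ (by rw [mul_one, Complex.exp_add])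
  have Fxp2 : Complex.sinh (x + a₂) * (2 * (Complex.exp x * Complex.exp a₂ * 1)) =
      (Complex.exp x * Complex.exp a₂) ^ 2 - 1 ^ 2 :=
    sinh_scaled _ _ _ (by rw [mul_one, Complex.exp_add])
  have Fxp3 : Complex.sinh (x + a₃) * (2 * (Complex.exp x * Complex.exp a₃ * 1)) =
      (Complex.exp x * Complex.exp a₃) ^ 2 - 1 ^ 2 :=
    sinh_scaled _ _ _ (by rw [mul_one, Complex.exp_add])
  have Fxp4 : Complex.sinh (x + a₄) * (2 * (Complex.exp x * Complex.exp a₄ * 1)) =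
      (Complex.exp x * Complex.exp a₄) ^ 2 - 1 ^ 2 :=
    sinh_scaled _ _ _ (by rw [mul_one, Complex.exp_add])
  have Fxm1 : Complex.sinh (x - a₁) * (2 * (Complex.exp x * Complex.exp a₁)) =
      Complex.exp x ^ 2 - Complex.exp a₁ ^ 2 :=
    sinh_scaled _ _ _ (by rw [← Complex.exp_add, sub_add_cancel])
  have Fxm2 : Complex.sinh (x - a₂) * (2 * (Complex.exp x * Complex.exp a₂)) =
      Complex.exp x ^ 2 - Complex.exp a₂ ^ 2 :=
    sinh_scaled _ _ _ (by rw [← Complex.exp_add, sub_add_cancel])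
  have Fxm3 : Complex.sinh (x - a₃) * (2 * (Complex.exp x * Complex.exp a₃)) =
      Complex.exp x ^ 2 - Complex.exp a₃ ^ 2 :=
    sinh_scaled _ _ _ (by rw [← Complex.exp_add, sub_add_cancel])
  have Fxm4 : Complex.sinh (x - a₄) * (2 * (Complex.exp x * Complex.exp a₄)) =
      Complex.exp x ^ 2 - Complex.exp a₄ ^ 2 :=
    sinh_scaled _ _ _ (by rw [← Complex.exp_add, sub_add_cancel])
  have FX : Complex.sinh (2 * x) * (2 * (Complex.exp x ^ 2 * 1)) =
      (Complex.exp x ^ 2) ^ 2 - 1 ^ 2 :=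
    sinh_scaled _ _ _ (by rw [mul_one, sq, ← Complex.exp_add, two_mul])
  have FZ : Complex.sinh (2 * z) * (2 * (Complex.exp z ^ 2 * 1)) =
      (Complex.exp z ^ 2) ^ 2 - 1 ^ 2 :=
    sinh_scaled _ _ _ (by rw [mul_one, sq, ← Complex.exp_add, two_mul])
  have Fzp1 : Complex.sinh (z + μ - a₁) * (2 * (Complex.exp z * Complex.exp μ * Complex.exp a₁)) =
      (Complex.exp z * Complex.exp μ) ^ 2 - Complex.exp a₁ ^ 2 :=
    sinh_scaled _ _ _ (by rw [← Complex.exp_add, sub_add_cancel, Complex.exp_add])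
  have Fzp2 : Complex.sinh (z + μ - a₂) * (2 * (Complex.exp z * Complex.exp μ * Complex.exp a₂)) =
      (Complex.exp z * Complex.exp μ) ^ 2 - Complex.exp a₂ ^ 2 :=
    sinh_scaled _ _ _ (by rw [← Complex.exp_add, sub_add_cancel, Complex.exp_add])
  have Fzp3 : Complex.sinh (z + μ - a₃) * (2 * (Complex.exp z * Complex.exp μ * Complex.exp a₃)) =
      (Complex.exp z * Complex.exp μ) ^ 2 - Complex.exp a₃ ^ 2 :=
    sinh_scaled _ _ _ (by rw [← Complex.exp_add, sub_add_cancel, Complex.exp_add])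
  have Fzp4 : Complex.sinh (z + μ - a₄) * (2 * (Complex.exp z * Complex.exp μ * Complex.exp a₄)) =
      (Complex.exp z * Complex.exp μ) ^ 2 - Complex.exp a₄ ^ 2 :=
    sinh_scaled _ _ _ (by rw [← Complex.exp_add, sub_add_cancel, Complex.exp_add])
  have Fzm1 : Complex.sinh (z - μ + a₁) * (2 * (Complex.exp z * Complex.exp a₁ * Complex.exp μ)) =
      (Complex.exp z * Complex.exp a₁) ^ 2 - Complex.exp μ ^ 2 :=
    sinh_scaled _ _ _ (by
      rw [← Complex.exp_add, show z - μ + a₁ + μ = z + a₁ by ring, Complex.exp_add])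
  have Fzm2 : Complex.sinh (z - μ + a₂) * (2 * (Complex.exp z * Complex.exp a₂ * Complex.exp μ)) =
      (Complex.exp z * Complex.exp a₂) ^ 2 - Complex.exp μ ^ 2 :=
    sinh_scaled _ _ _ (by
      rw [← Complex.exp_add, show z - μ + a₂ + μ = z + a₂ by ring, Complex.exp_add])
  have Fzm3 : Complex.sinh (z - μ + a₃) * (2 * (Complex.exp z * Complex.exp a₃ * Complex.exp μ)) =
      (Complex.exp z * Complex.exp a₃) ^ 2 - Complex.exp μ ^ 2 :=
    sinh_scaled _ _ _ (by
      rw [← Complex.exp_add, show z - μ + a₃ + μ = z + a₃ by ring, Complex.exp_add])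
  have Fzm4 : Complex.sinh (z - μ + a₄) * (2 * (Complex.exp z * Complex.exp a₄ * Complex.exp μ)) =
      (Complex.exp z * Complex.exp a₄) ^ 2 - Complex.exp μ ^ 2 :=
    sinh_scaled _ _ _ (by
      rw [← Complex.exp_add, show z - μ + a₄ + μ = z + a₄ by ring, Complex.exp_add])
  have FE : Complex.sinh (a₁ + a₂ + a₃ + a₄ - 2 * μ) *
      (2 * (Complex.exp a₁ * Complex.exp a₂ * Complex.exp a₃ * Complex.exp a₄ *
        Complex.exp μ ^ 2)) =
      (Complex.exp a₁ * Complex.exp a₂ * Complex.exp a₃ * Complex.exp a₄) ^ 2 -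
        (Complex.exp μ ^ 2) ^ 2 :=
    sinh_scaled _ _ _ (by
      rw [sq, ← Complex.exp_add, ← Complex.exp_add,
        show a₁ + a₂ + a₃ + a₄ - 2 * μ + (μ + μ) = a₁ + a₂ + a₃ + a₄ by ring,
        Complex.exp_add, Complex.exp_add, Complex.exp_add])
  have Gxp : (ς (x + μ) - ς z) *
      (4 * ((Complex.exp x * Complex.exp μ) ^ 2 * 1 * (Complex.exp z ^ 2 * 1))) =
      (((Complex.exp x * Complex.exp μ) ^ 2) ^ 2 + 1 ^ 2) * (Complex.exp z ^ 2 * 1) -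
        ((Complex.exp z ^ 2) ^ 2 + 1 ^ 2) * ((Complex.exp x * Complex.exp μ) ^ 2 * 1) :=
    sig_scaled _ _ _ _ _ _
      (by rw [mul_one, show (2 : ℂ) * (x + μ) = x + μ + (x + μ) by ring, Complex.exp_add,
        Complex.exp_add, sq])
      (by rw [mul_one, sq, ← Complex.exp_add, two_mul])
  have Gxm : (ς (x - μ) - ς z) *
      (4 * (Complex.exp x ^ 2 * Complex.exp μ ^ 2 * (Complex.exp z ^ 2 * 1))) =
      ((Complex.exp x ^ 2) ^ 2 + (Complex.exp μ ^ 2) ^ 2) * (Complex.exp z ^ 2 * 1) -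
        ((Complex.exp z ^ 2) ^ 2 + 1 ^ 2) * (Complex.exp x ^ 2 * Complex.exp μ ^ 2) :=
    sig_scaled _ _ _ _ _ _
      (by rw [sq (Complex.exp μ), ← Complex.exp_add, ← Complex.exp_add,
        show (2 : ℂ) * (x - μ) + (μ + μ) = x + x by ring, Complex.exp_add, sq])
      (by rw [mul_one, sq, ← Complex.exp_add, two_mul])
  have Gzp : (ς (z + μ) - ς x) *
      (4 * ((Complex.exp z * Complex.exp μ) ^ 2 * 1 * (Complex.exp x ^ 2 * 1))) =
      (((Complex.exp z * Complex.exp μ) ^ 2) ^ 2 + 1 ^ 2) * (Complex.exp x ^ 2 * 1) -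
        ((Complex.exp x ^ 2) ^ 2 + 1 ^ 2) * ((Complex.exp z * Complex.exp μ) ^ 2 * 1) :=
    sig_scaled _ _ _ _ _ _
      (by rw [mul_one, show (2 : ℂ) * (z + μ) = z + μ + (z + μ) by ring, Complex.exp_add,
        Complex.exp_add, sq])
      (by rw [mul_one, sq, ← Complex.exp_add, two_mul])
  have Gzm : (ς (z - μ) - ς x) *
      (4 * (Complex.exp z ^ 2 * Complex.exp μ ^ 2 * (Complex.exp x ^ 2 * 1))) =
      ((Complex.exp z ^ 2) ^ 2 + (Complex.exp μ ^ 2) ^ 2) * (Complex.exp x ^ 2 * 1) -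
        ((Complex.exp x ^ 2) ^ 2 + 1 ^ 2) * (Complex.exp z ^ 2 * Complex.exp μ ^ 2) :=
    sig_scaled _ _ _ _ _ _
      (by rw [sq (Complex.exp μ), ← Complex.exp_add, ← Complex.exp_add,
        show (2 : ℂ) * (z - μ) + (μ + μ) = z + z by ring, Complex.exp_add, sq])
      (by rw [mul_one, sq, ← Complex.exp_add, two_mul])
  have hW : (8192 : ℂ) * Complex.exp x ^ 12 * Complex.exp z ^ 12 * Complex.exp μ ^ 10 *
      (Complex.exp a₁ * Complex.exp a₂ * Complex.exp a₃ * Complex.exp a₄) ≠ 0 := by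
    simp [Complex.exp_ne_zero]
  refine mul_right_cancel₀ hW ?_
  have e1 : (Complex.sinh (x + a₁) * Complex.sinh (x + a₂) * Complex.sinh (x + a₃) *
          Complex.sinh (x + a₄) * (Complex.sinh (2 * x) * (ς (x - μ) - ς z)) -
        Complex.sinh (2 * x) * (ς (x + μ) - ς z) *
          (Complex.sinh (x - a₁) * Complex.sinh (x - a₂) * Complex.sinh (x - a₃) *
            Complex.sinh (x - a₄))) *
      (Complex.sinh (2 * z) * (ς (z + μ) - ς x) *
        (Complex.sinh (2 * z) * (ς (z - μ) - ς x))) *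
      ((8192 : ℂ) * Complex.exp x ^ 12 * Complex.exp z ^ 12 * Complex.exp μ ^ 10 *
        (Complex.exp a₁ * Complex.exp a₂ * Complex.exp a₃ * Complex.exp a₄)) =
      (Complex.sinh (x + a₁) * (2 * (Complex.exp x * Complex.exp a₁ * 1)) *
        (Complex.sinh (x + a₂) * (2 * (Complex.exp x * Complex.exp a₂ * 1))) *
        (Complex.sinh (x + a₃) * (2 * (Complex.exp x * Complex.exp a₃ * 1))) *
        (Complex.sinh (x + a₄) * (2 * (Complex.exp x * Complex.exp a₄ * 1))) *
        (Complex.sinh (2 * x) * (2 * (Complex.exp x ^ 2 * 1))) *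
        ((ς (x - μ) - ς z) *
          (4 * (Complex.exp x ^ 2 * Complex.exp μ ^ 2 * (Complex.exp z ^ 2 * 1)))) -
       Complex.sinh (x - a₁) * (2 * (Complex.exp x * Complex.exp a₁)) *
        (Complex.sinh (x - a₂) * (2 * (Complex.exp x * Complex.exp a₂))) *
        (Complex.sinh (x - a₃) * (2 * (Complex.exp x * Complex.exp a₃))) *
        (Complex.sinh (x - a₄) * (2 * (Complex.exp x * Complex.exp a₄))) *
        (Complex.sinh (2 * x) * (2 * (Complex.exp x ^ 2 * 1))) *
        ((ς (x + μ) - ς z) *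
          (4 * ((Complex.exp x * Complex.exp μ) ^ 2 * 1 * (Complex.exp z ^ 2 * 1))))) *
      (Complex.exp z ^ 2 * Complex.exp μ ^ 4) *
      ((Complex.sinh (2 * z) * (2 * (Complex.exp z ^ 2 * 1)) *
          ((ς (z + μ) - ς x) *
            (4 * ((Complex.exp z * Complex.exp μ) ^ 2 * 1 * (Complex.exp x ^ 2 * 1))))) *
        (Complex.sinh (2 * z) * (2 * (Complex.exp z ^ 2 * 1)) *
          ((ς (z - μ) - ς x) *
            (4 * (Complex.exp z ^ 2 * Complex.exp μ ^ 2 * (Complex.exp x ^ 2 * 1)))))) := by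
    ring
  have e2 : (Complex.sinh (z + μ - a₁) * Complex.sinh (z + μ - a₂) * Complex.sinh (z + μ - a₃) *
          Complex.sinh (z + μ - a₄) * (Complex.sinh (2 * z) * (ς (z - μ) - ς x)) -
        Complex.sinh (2 * z) * (ς (z + μ) - ς x) *
          (Complex.sinh (z - μ + a₁) * Complex.sinh (z - μ + a₂) * Complex.sinh (z - μ + a₃) *
            Complex.sinh (z - μ + a₄)) +
        Complex.sinh (a₁ + a₂ + a₃ + a₄ - 2 * μ) *
          (Complex.sinh (2 * z) * (ς (z + μ) - ς x) *
            (Complex.sinh (2 * z) * (ς (z - μ) - ς x)))) *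
      (Complex.sinh (2 * x) * (ς (x + μ) - ς z) *
        (Complex.sinh (2 * x) * (ς (x - μ) - ς z))) *
      ((8192 : ℂ) * Complex.exp x ^ 12 * Complex.exp z ^ 12 * Complex.exp μ ^ 10 *
        (Complex.exp a₁ * Complex.exp a₂ * Complex.exp a₃ * Complex.exp a₄)) =
      ((Complex.sinh (z + μ - a₁) * (2 * (Complex.exp z * Complex.exp μ * Complex.exp a₁)) *
          (Complex.sinh (z + μ - a₂) * (2 * (Complex.exp z * Complex.exp μ * Complex.exp a₂))) *
          (Complex.sinh (z + μ - a₃) * (2 * (Complex.exp z * Complex.exp μ * Complex.exp a₃))) *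
          (Complex.sinh (z + μ - a₄) * (2 * (Complex.exp z * Complex.exp μ * Complex.exp a₄))) *
          (Complex.sinh (2 * z) * (2 * (Complex.exp z ^ 2 * 1))) *
          ((ς (z - μ) - ς x) *
            (4 * (Complex.exp z ^ 2 * Complex.exp μ ^ 2 * (Complex.exp x ^ 2 * 1)))) -
        Complex.sinh (z - μ + a₁) * (2 * (Complex.exp z * Complex.exp a₁ * Complex.exp μ)) *
          (Complex.sinh (z - μ + a₂) * (2 * (Complex.exp z * Complex.exp a₂ * Complex.exp μ))) *
          (Complex.sinh (z - μ + a₃) * (2 * (Complex.exp z * Complex.exp a₃ * Complex.exp μ))) *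
          (Complex.sinh (z - μ + a₄) * (2 * (Complex.exp z * Complex.exp a₄ * Complex.exp μ))) *
          (Complex.sinh (2 * z) * (2 * (Complex.exp z ^ 2 * 1))) *
          ((ς (z + μ) - ς x) *
            (4 * ((Complex.exp z * Complex.exp μ) ^ 2 * 1 * (Complex.exp x ^ 2 * 1))))) *
        Complex.exp x ^ 2 +
        Complex.sinh (a₁ + a₂ + a₃ + a₄ - 2 * μ) *
          (2 * (Complex.exp a₁ * Complex.exp a₂ * Complex.exp a₃ * Complex.exp a₄ *
            Complex.exp μ ^ 2)) *
          ((Complex.sinh (2 * z) * (2 * (Complex.exp z ^ 2 * 1)) *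
            ((ς (z + μ) - ς x) *
              (4 * ((Complex.exp z * Complex.exp μ) ^ 2 * 1 * (Complex.exp x ^ 2 * 1))))) *
          (Complex.sinh (2 * z) * (2 * (Complex.exp z ^ 2 * 1)) *
            ((ς (z - μ) - ς x) *
              (4 * (Complex.exp z ^ 2 * Complex.exp μ ^ 2 * (Complex.exp x ^ 2 * 1))))))) *
      ((Complex.sinh (2 * x) * (2 * (Complex.exp x ^ 2 * 1)) *
          ((ς (x + μ) - ς z) *
            (4 * ((Complex.exp x * Complex.exp μ) ^ 2 * 1 * (Complex.exp z ^ 2 * 1))))) *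
        (Complex.sinh (2 * x) * (2 * (Complex.exp x ^ 2 * 1)) *
          ((ς (x - μ) - ς z) *
            (4 * (Complex.exp x ^ 2 * Complex.exp μ ^ 2 * (Complex.exp z ^ 2 * 1)))))) := by
    ring
  rw [e1, e2, Fxp1, Fxp2, Fxp3, Fxp4, Fxm1, Fxm2, Fxm3, Fxm4, FX, FZ,
    Fzp1, Fzp2, Fzp3, Fzp4, Fzm1, Fzm2, Fzm3, Fzm4, FE, Gxp, Gxm, Gzp, Gzm]
  ring
end

section
/- For complex η, β, λ, μ with sinh(ηβ) ≠ 0, the 4×4 matrices S_1(λ|β) S_2(μ|β+σ^z_1-shift) and the dynamical R-matrix satisfy the Vertex-IRF relation R_{12}(λ−μ) · S_1(λ|β) · S_2(μ|β+σ^z_1) = S_2(μ|β) · S_1(λ|β+σ^z_2) · R^{SOS}_{12}(λ−μ|β), where R_{12}(λ) is the 6-vertex matrix diag-block matrix with entries [[sinh(λ+η),0,0,0],[0,sinh λ, sinh η,0],[0,sinh η, sinh λ,0],[0,0,0,sinh(λ+η)]], S(λ|β) is the 2×2 matrix [[e^{λ−η(β+α)}, e^{λ+η(β−α)}],[1,1]]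 for an arbitrary shift parameter α, R^{SOS}(λ|β) is the matrix [[sinh(λ+η),0,0,0],[0, sinh(η(β+1)) sinh λ/sinh(ηβ), sinh(λ+ηβ) sinh η/sinh(ηβ),0],[0, sinh(ηβ−λ) sinh η/sinh(ηβ), sinh(η(β−1)) sinh λ/sinh(ηβ),0],[0,0,0,sinh(λ+η)]], and where S_1(λ|β+σ^z_2) means the operator acting on C^2⊗C^2 whose restriction to the subspace where the second factor has σ^z-eigenvalue s ∈ {+1,−1} is S(λ|β+s) ⊗ id appropriately placed (similarly for S_2(μ|β+σ^z_1)). -/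
open Complex

/-- The 6-vertex trigonometric R-matrix on `ℂ² ⊗ ℂ²`. -/
noncomputable def R6v (η l : ℂ) : Matrix (Fin 2 × Fin 2) (Fin 2 × Fin 2) ℂ :=
  Matrix.of fun p q =>
    if p = q then (if p.1 = p.2 then Complex.sinh (l + η) else Complex.sinh l)
    else if p.1 = q.2 ∧ p.2 = q.1 then Complex.sinh η
    else 0

/-- The trigonometric dynamical (SOS) R-matrix `R^{SOS}(λ|β)`. -/
noncomputable def RSOS (η β l : ℂ) : Matrix (Fin 2 × Fin 2) (Fin 2 × Fin 2) ℂ :=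
  Matrix.of fun p q =>
    if p = q then
      (if p.1 = p.2 then Complex.sinh (l + η)
       else if p.1 = 0 then
         Complex.sinh (η * (β + 1)) * Complex.sinh l / Complex.sinh (η * β)
       else Complex.sinh (η * (β - 1)) * Complex.sinh l / Complex.sinh (η * β))
    else if p.1 = q.2 ∧ p.2 = q.1 ∧ p.1 ≠ p.2 then
      (if p.1 = 0 then Complex.sinh (l + η * β) * Complex.sinh η / Complex.sinh (η * β)
       else Complex.sinh (η * β - l) * Complex.sinh η / Complex.sinh (η * β))
    else 0

/-- The local Vertex-IRF gauge matrix `S(λ|β)` (with shift parameter `α`). -/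
noncomputable def Sgauge (α η β l : ℂ) : Matrix (Fin 2) (Fin 2) ℂ :=
  !![Complex.exp (l - η * (β + α)), Complex.exp (l + η * (β - α)); 1, 1]

/-- σᶻ-eigenvalue of the basis vector indexed by `j : Fin 2`. -/
def σz (j : Fin 2) : ℂ := if j = 0 then 1 else -1

/-- `S₁(λ|β) = S(λ|β) ⊗ id`. -/
noncomputable def S1 (α η β l : ℂ) : Matrix (Fin 2 × Fin 2) (Fin 2 × Fin 2) ℂ :=
  Matrix.of fun p q => if p.2 = q.2 then Sgauge α η β l p.1 q.1 else 0

/-- `S₁(λ|β+σᶻ₂)`: on the σᶻ-eigenspace of the second factor with eigenvalue `s`,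
acts as `S(λ|β+s) ⊗ id`. -/
noncomputable def S1dyn (α η β l : ℂ) : Matrix (Fin 2 × Fin 2) (Fin 2 × Fin 2) ℂ :=
  Matrix.of fun p q => if p.2 = q.2 then Sgauge α η (β + σz p.2) l p.1 q.1 else 0

/-- `S₂(μ|β) = id ⊗ S(μ|β)`. -/
noncomputable def S2 (α η β l : ℂ) : Matrix (Fin 2 × Fin 2) (Fin 2 × Fin 2) ℂ :=
  Matrix.of fun p q => if p.1 = q.1 then Sgauge α η β l p.2 q.2 else 0

/-- `S₂(μ|β+σᶻ₁)`. -/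
noncomputable def S2dyn (α η β l : ℂ) : Matrix (Fin 2 × Fin 2) (Fin 2 × Fin 2) ℂ :=
  Matrix.of fun p q => if p.1 = q.1 then Sgauge α η (β + σz p.1) l p.2 q.2 else 0

set_option maxHeartbeats 2000000 in
/-- The Vertex-IRF transformation:
`R₁₂(λ−μ) S₁(λ|β) S₂(μ|β+σᶻ₁) = S₂(μ|β) S₁(λ|β+σᶻ₂) R^{SOS}₁₂(λ−μ|β)`. -/
theorem vertex_IRF (η β α lam mu : ℂ) (hβ : Complex.sinh (η * β) ≠ 0) :
    R6v η (lam - mu) * S1 α η β lam * S2dyn α η β mu =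
      S2 α η β mu * S1dyn α η β lam * RSOS η β (lam - mu) := by
  ext ⟨i,j⟩ ⟨k,l⟩
  fin_cases i <;> fin_cases j <;> fin_cases k <;> fin_cases l <;>
    simp [Matrix.mul_apply, Fintype.sum_prod_type, Fin.sum_univ_two, R6v, RSOS,
      Sgauge, σz, S1, S2, S1dyn, S2dyn, Prod.ext_iff, Prod.fst_one, Prod.snd_one] <;>
  · try field_simp
    try simp only [Complex.sinh]
    try ring_nf
    try simp only [← Complex.exp_add]
    try ring_nf
end

section
/- With the notation of the previous statement (ξ_n^{(h)} = ξ_n + η/2 − hη, V̂(x_1,...,x_N) = ∏_{j<k}(sinh^2 x_k − sinh^2 x_j), u_n = −∏_{j≠n} sinh(ξ_n−ξ_j+η) sinh(ξ_n+ξ_j+η)/( sinh(ξ_n+ξ_j−η) sinh(ξ_n−ξ_j−η) )), for every tuple (h_1,...,h_N) ∈ {0,1}^N one has ∏_{n=1}^N (−u_n)^{h_n} · V̂(ξ_1^{(h_1)},...,ξ_N^{(h_N)}) = [ V̂(ξ_1^{(0)},...,ξ_N^{(0)}) / V̂(ξ_1^{(1)},...,ξ_N^{(1)}) ] · V̂(ξ_1^{(1−h_1)},...,ξ_N^{(1−h_N)}),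 assuming all the Vandermonde determinants involved are nonzero. -/
open Complex Finset

/-- The modified Vandermonde `V̂(x₁,…,x_N) = ∏_{j<k} (sinh² x_k − sinh² x_j)`. -/
noncomputable def Vhat {N : ℕ} (x : Fin N → ℂ) : ℂ :=
  ∏ p ∈ Finset.univ.filter (fun p : Fin N × Fin N => p.1 < p.2),
    (Complex.sinh (x p.2) ^ 2 - Complex.sinh (x p.1) ^ 2)

/-- The dressing factor `u_n` of the left separate states. -/
noncomputable def udress {N : ℕ} (ξ : Fin N → ℂ) (η : ℂ) (n : Fin N) : ℂ :=
  -∏ j ∈ Finset.univ.erase n,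
      (Complex.sinh (ξ n - ξ j + η) * Complex.sinh (ξ n + ξ j + η) /
        (Complex.sinh (ξ n + ξ j - η) * Complex.sinh (ξ n - ξ j - η)))

lemma prod_pairs {N : ℕ} (F : Fin N → Fin N → ℂ) :
    (∏ n, ∏ j ∈ Finset.univ.erase n, F n j) =
      ∏ p ∈ Finset.univ.filter (fun p : Fin N × Fin N => p.1 < p.2), (F p.1 p.2 * F p.2 p.1) := by
  rw [Finset.prod_mul_distrib]
  have h2 : (∏ p ∈ Finset.univ.filter (fun p : Fin N × Fin N => p.1 < p.2), F p.2 p.1)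
      = ∏ p ∈ Finset.univ.filter (fun p : Fin N × Fin N => p.2 < p.1), F p.1 p.2 := by
    apply Finset.prod_nbij' (fun p => (p.2, p.1)) (fun p => (p.2, p.1)) <;> simp
  rw [h2, ← Finset.prod_union (by
    simp [Finset.disjoint_filter]
    intro p hp; omega)]
  have hset : (Finset.univ.filter (fun p : Fin N × Fin N => p.1 < p.2)) ∪
      (Finset.univ.filter (fun p : Fin N × Fin N => p.2 < p.1)) =
      Finset.univ.filter (fun p : Fin N × Fin N => p.2 ≠ p.1) := by
    rw [← Finset.filter_or]
    apply Finset.filter_congr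
    intro p _
    constructor
    · rintro (h | h) <;> omega
    · intro h; rcases lt_or_gt_of_ne h with h' | h'
      · right; exact h'
      · left; exact h'
  rw [hset, Finset.prod_filter, ← Finset.univ_product_univ, Finset.prod_product]
  apply Finset.prod_congr rfl
  intro n _
  rw [← Finset.prod_filter, Finset.filter_ne']

set_option maxHeartbeats 4000000 in
lemma keypair (a b η : ℂ) (hj hk : ℕ) (hj1 : hj ≤ 1) (hk1 : hk ≤ 1) :
    (sinh (a - b + η) * sinh (a + b + η)) ^ hj * (sinh (b - a + η) * sinh (b + a + η)) ^ hk *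
      ((sinh (b + η / 2 - (hk : ℂ) * η)) ^ 2 - (sinh (a + η / 2 - (hj : ℂ) * η)) ^ 2) *
      ((sinh (b + η / 2 - η)) ^ 2 - (sinh (a + η / 2 - η)) ^ 2)
    = (sinh (a + b - η) * sinh (a - b - η)) ^ hj * (sinh (b + a - η) * sinh (b - a - η)) ^ hk *
      ((sinh (b + η / 2)) ^ 2 - (sinh (a + η / 2)) ^ 2) *
      ((sinh (b + η / 2 - ((1 - hk : ℕ) : ℂ) * η)) ^ 2 - (sinh (a + η / 2 - ((1 - hj : ℕ) : ℂ) * η)) ^ 2) := by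
  obtain ⟨t, rfl⟩ : ∃ t, η = t + t := ⟨η / 2, by ring⟩
  simp only [add_self_div_two]
  interval_cases hj <;> interval_cases hk <;>
    simp only [pow_zero, pow_one, Nat.sub_zero, Nat.sub_self, Nat.cast_one, Nat.cast_zero,
      one_mul, zero_mul, sub_zero, mul_one]
  all_goals
    simp only [Complex.sinh, Complex.exp_add, Complex.exp_sub, Complex.exp_neg]
    field_simp
    ring_nf
  all_goals
    simp only [← Complex.exp_neg, ← Complex.exp_nat_mul, ← Complex.exp_add]
    ring_nf

/-- For every `(h₁,…,h_N) ∈ {0,1}^N`, with `ξ_n^{(h)} = ξ_n + η/2 − hη`,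
`∏ (−u_n)^{h_n} · V̂(ξ^{(h)}) = [V̂(ξ^{(0)})/V̂(ξ^{(1)})] · V̂(ξ^{(1−h)})`. -/
theorem flip_identity (N : ℕ) (ξ : Fin N → ℂ) (η : ℂ) (h : Fin N → ℕ)
    (hh : ∀ n, h n ≤ 1)
    (hden : ∀ n j, j ≠ n →
      Complex.sinh (ξ n + ξ j - η) ≠ 0 ∧ Complex.sinh (ξ n - ξ j - η) ≠ 0)
    (hV0 : Vhat (fun n => ξ n + η / 2) ≠ 0)
    (hV1 : Vhat (fun n => ξ n + η / 2 - η) ≠ 0)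
    (hVh : Vhat (fun n => ξ n + η / 2 - (h n : ℂ) * η) ≠ 0)
    (hVh' : Vhat (fun n => ξ n + η / 2 - ((1 - h n : ℕ) : ℂ) * η) ≠ 0) :
    (∏ n, (-udress ξ η n) ^ h n) * Vhat (fun n => ξ n + η / 2 - (h n : ℂ) * η) =
      Vhat (fun n => ξ n + η / 2) / Vhat (fun n => ξ n + η / 2 - η) *
        Vhat (fun n => ξ n + η / 2 - ((1 - h n : ℕ) : ℂ) * η) := by
  classical
  set P : Fin N → ℂ := fun n =>
    ∏ j ∈ Finset.univ.erase n, (Complex.sinh (ξ n - ξ j + η) * Complex.sinh (ξ n + ξ j + η))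
    with hP
  set Q : Fin N → ℂ := fun n =>
    ∏ j ∈ Finset.univ.erase n, (Complex.sinh (ξ n + ξ j - η) * Complex.sinh (ξ n - ξ j - η))
    with hQdef
  have hu : ∀ n, -udress ξ η n = P n / Q n := by
    intro n
    rw [udress, neg_neg, hP, hQdef, ← Finset.prod_div_distrib]
  have hQn : ∀ n, Q n ≠ 0 := by
    intro n
    rw [hQdef]
    refine Finset.prod_ne_zero_iff.mpr fun j hj => ?_
    have hne : j ≠ n := Finset.ne_of_mem_erase hj
    exact mul_ne_zero (hden n j hne).1 (hden n j hne).2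
  have hQ : (∏ n, Q n ^ h n) ≠ 0 :=
    Finset.prod_ne_zero_iff.mpr fun n _ => pow_ne_zero _ (hQn n)
  have hprod : (∏ n, (-udress ξ η n) ^ h n) = (∏ n, P n ^ h n) / (∏ n, Q n ^ h n) := by
    rw [← Finset.prod_div_distrib]
    exact Finset.prod_congr rfl fun n _ => by rw [hu n, div_pow]
  have hPsplit : (∏ n, P n ^ h n) =
      ∏ p ∈ Finset.univ.filter (fun p : Fin N × Fin N => p.1 < p.2),
        ((Complex.sinh (ξ p.1 - ξ p.2 + η) * Complex.sinh (ξ p.1 + ξ p.2 + η)) ^ h p.1 *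
          (Complex.sinh (ξ p.2 - ξ p.1 + η) * Complex.sinh (ξ p.2 + ξ p.1 + η)) ^ h p.2) := by
    rw [← prod_pairs (fun n j => (Complex.sinh (ξ n - ξ j + η) * Complex.sinh (ξ n + ξ j + η)) ^ h n)]
    exact Finset.prod_congr rfl fun n _ => by rw [hP, ← Finset.prod_pow]
  have hQsplit : (∏ n, Q n ^ h n) =
      ∏ p ∈ Finset.univ.filter (fun p : Fin N × Fin N => p.1 < p.2),
        ((Complex.sinh (ξ p.1 + ξ p.2 - η) * Complex.sinh (ξ p.1 - ξ p.2 - η)) ^ h p.1 *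
          (Complex.sinh (ξ p.2 + ξ p.1 - η) * Complex.sinh (ξ p.2 - ξ p.1 - η)) ^ h p.2) := by
    rw [← prod_pairs (fun n j => (Complex.sinh (ξ n + ξ j - η) * Complex.sinh (ξ n - ξ j - η)) ^ h n)]
    exact Finset.prod_congr rfl fun n _ => by rw [hQdef, ← Finset.prod_pow]
  have E : (∏ n, P n ^ h n) * Vhat (fun n => ξ n + η / 2 - (h n : ℂ) * η) *
        Vhat (fun n => ξ n + η / 2 - η)
      = (∏ n, Q n ^ h n) * Vhat (fun n => ξ n + η / 2) *
        Vhat (fun n => ξ n + η / 2 - ((1 - h n : ℕ) : ℂ) * η) := by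
    rw [hPsplit, hQsplit]
    simp only [Vhat]
    rw [← Finset.prod_mul_distrib, ← Finset.prod_mul_distrib,
      ← Finset.prod_mul_distrib, ← Finset.prod_mul_distrib]
    exact Finset.prod_congr rfl fun p _ =>
      keypair (ξ p.1) (ξ p.2) η (h p.1) (h p.2) (hh p.1) (hh p.2)
  rw [hprod, div_mul_eq_mul_div, div_mul_eq_mul_div, div_eq_div_iff hQ hV1]
  linear_combination E
end

section
/- Let x_1,...,x_L, η be complex, with ς(z) = cosh(2z)/2, and define polynomials (in ς) X^{(±)}(λ) = ∏_{ℓ=1}^L (ς(λ) − ς(x_ℓ ± η/2)) and X_k^{(±)}(λ) = ∏_{ℓ≠k} (ς(λ) − ς(x_ℓ ± η/2)). Define the 2L×2L matrix D̃ by: for 1 ≤ k ≤ L, X_k^{(+)}(λ) X_k^{(−)}(λ) = Σ_{j=1}^{2L} D̃_{j,k} ς(λ)^{j−1}, and for L+1 ≤ k ≤ 2L, X^{(+)}(λ) X_{k−L}^{(−)}(λ) = Σ_{j=1}^{2L} D̃_{j,k} ς(λ)^{j−1}. Then det D̃ = V̂(x_L+η/2,...,x_1+η/2) · V̂(x_L−η/2,...,x_1−η/2)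 · ∏_{k=1}^L X_k^{(−)}(x_k+η/2), where V̂(y_1,...,y_L) = ∏_{j<k}(sinh^2 y_k − sinh^2 y_j) with ordering as indicated. -/
open Complex Finset

open Polynomial

variable {R : Type*} [CommRing R]

lemma IoiProdEqAux {L : ℕ} (i : Fin L) (g : Fin L → R) :
    ∏ j ∈ Ioi i, g j = ∏ j, if i < j then g j else 1 := by
  rw [← Finset.prod_filter]; congr 1; ext j; simp

lemma prod_pairs_eq {L : ℕ} (f : Fin L → Fin L → R) :
    ∏ p ∈ Finset.univ.filter (fun p : Fin L × Fin L => p.1 < p.2), f p.1 p.2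
      = ∏ i, ∏ j ∈ Ioi i, f i j := by
  rw [Finset.prod_filter, Fintype.prod_prod_type]
  exact Finset.prod_congr rfl fun i _ => (IoiProdEqAux i (f i)).symm

lemma prod_erase_eq {L : ℕ} (f : Fin L → Fin L → R) :
    ∏ k, ∏ m ∈ univ.erase k, f k m
      = (∏ i, ∏ j ∈ Ioi i, f i j) * (∏ i, ∏ j ∈ Ioi i, f j i) := by
  have herase : ∀ k : Fin L, (univ.erase k) = Ioi k ∪ Iio k := by
    intro k; ext m
    simp only [Finset.mem_erase, Finset.mem_union, Finset.mem_Ioi, Finset.mem_Iio, Finset.mem_univ, and_true]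
    constructor
    · intro h; rcases lt_or_gt_of_ne h with h1 | h1
      · exact Or.inr h1
      · exact Or.inl h1
    · rintro (h | h)
      · exact ne_of_gt h
      · exact ne_of_lt h
  have hdisj : ∀ k : Fin L, Disjoint (Ioi k) (Iio k) := by
    intro k
    refine Finset.disjoint_left.2 fun m hm hm' => ?_
    simp only [Finset.mem_Ioi, Finset.mem_Iio] at hm hm'
    exact absurd (hm.trans hm') (lt_irrefl k)
  calc ∏ k, ∏ m ∈ univ.erase k, f k m
      = ∏ k, ((∏ m ∈ Ioi k, f k m) * ∏ m ∈ Iio k, f k m) := by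
        refine Finset.prod_congr rfl fun k _ => ?_
        rw [herase k, Finset.prod_union (hdisj k)]
    _ = (∏ i, ∏ j ∈ Ioi i, f i j) * ∏ k, ∏ m ∈ Iio k, f k m := by
        rw [Finset.prod_mul_distrib]
    _ = _ := by
        congr 1
        refine Finset.prod_comm' fun k m => ?_
        simp [Finset.mem_Ioi, Finset.mem_Iio]

lemma vandermonde_split {L : ℕ} (t : Fin (L + L) → R) :
    ∏ i, ∏ j ∈ Ioi i, (t j - t i)
      = ((∏ i, ∏ j ∈ Ioi i, (t (Fin.castAdd L j) - t (Fin.castAdd L i))) *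
          ∏ i, ∏ j ∈ Ioi i, (t (Fin.natAdd L j) - t (Fin.natAdd L i))) *
        ∏ k, ∏ m, (t (Fin.natAdd L m) - t (Fin.castAdd L k)) := by
  have hcc : ∀ i j : Fin L, Fin.castAdd L i < Fin.castAdd L j ↔ i < j := by
    intro i j
    simp only [Fin.lt_def, Fin.coe_castAdd]
  have hnn : ∀ i j : Fin L, Fin.natAdd L i < Fin.natAdd L j ↔ i < j := by
    intro i j
    simp only [Fin.lt_def, Fin.coe_natAdd]
    omega
  have hcn : ∀ i j : Fin L, Fin.castAdd L i < Fin.natAdd L j := by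
    intro i j
    simp only [Fin.lt_def, Fin.coe_castAdd, Fin.coe_natAdd]
    omega
  have hnc : ∀ i j : Fin L, ¬ Fin.natAdd L i < Fin.castAdd L j := by
    intro i j
    simp only [Fin.lt_def, Fin.coe_castAdd, Fin.coe_natAdd]
    omega
  have inner : ∀ i : Fin (L + L),
      ∏ j ∈ Ioi i, (t j - t i)
        = (∏ j : Fin L, if i < Fin.castAdd L j then t (Fin.castAdd L j) - t i else 1) *
          ∏ j : Fin L, if i < Fin.natAdd L j then t (Fin.natAdd L j) - t i else 1 := by
    intro i
    rw [IoiProdEqAux, Fin.prod_univ_add]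
  rw [Fin.prod_univ_add (f := fun i => ∏ j ∈ Ioi i, (t j - t i))]
  have h1 : ∀ i : Fin L, ∏ j ∈ Ioi (Fin.castAdd L i), (t j - t (Fin.castAdd L i))
      = (∏ j ∈ Ioi i, (t (Fin.castAdd L j) - t (Fin.castAdd L i))) *
        ∏ j : Fin L, (t (Fin.natAdd L j) - t (Fin.castAdd L i)) := by
    intro i
    rw [inner]
    congr 1
    · simp only [hcc]
      exact (IoiProdEqAux i _).symm
    · exact Finset.prod_congr rfl fun j _ => if_pos (hcn i j)
  have h2 : ∀ i : Fin L, ∏ j ∈ Ioi (Fin.natAdd L i), (t j - t (Fin.natAdd L i))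
      = ∏ j ∈ Ioi i, (t (Fin.natAdd L j) - t (Fin.natAdd L i)) := by
    intro i
    rw [inner]
    have : (∏ j : Fin L, if Fin.natAdd L i < Fin.castAdd L j then t (Fin.castAdd L j) - t (Fin.natAdd L i) else 1) = 1 := by
      refine Finset.prod_eq_one fun j _ => if_neg (hnc i j)
    rw [this, one_mul]
    simp only [hnn]
    exact (IoiProdEqAux i _).symm
  calc (∏ i : Fin L, ∏ j ∈ Ioi (Fin.castAdd L i), (t j - t (Fin.castAdd L i))) *
        ∏ i : Fin L, ∏ j ∈ Ioi (Fin.natAdd L i), (t j - t (Fin.natAdd L i))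
      = ((∏ i : Fin L, ((∏ j ∈ Ioi i, (t (Fin.castAdd L j) - t (Fin.castAdd L i))) *
            ∏ j : Fin L, (t (Fin.natAdd L j) - t (Fin.castAdd L i))))) *
        ∏ i : Fin L, ∏ j ∈ Ioi i, (t (Fin.natAdd L j) - t (Fin.natAdd L i)) := by
        rw [Finset.prod_congr rfl fun i _ => h1 i, Finset.prod_congr rfl fun i _ => h2 i]
    _ = _ := by
        rw [Finset.prod_mul_distrib]
        ring

lemma det_coeff_matrix {R : Type*} [CommRing R] [IsDomain R] {L : ℕ}
    (hL : 0 < L) (t : Fin (L + L) → R) (hinj : Function.Injective t) :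
    (Matrix.of fun (j col : Fin (L + L)) =>
      (Fin.addCases (motive := fun _ => R[X])
        (fun k => (∏ m ∈ univ.erase k, (X - C (t (Fin.castAdd L m)))) *
          ∏ m ∈ univ.erase k, (X - C (t (Fin.natAdd L m))))
        (fun k => (∏ m, (X - C (t (Fin.castAdd L m)))) *
          ∏ m ∈ univ.erase k, (X - C (t (Fin.natAdd L m)))) col).coeff (j : ℕ)).det
    = (∏ i, ∏ j ∈ Ioi i, (t (Fin.castAdd L i) - t (Fin.castAdd L j))) *
      (∏ i, ∏ j ∈ Ioi i, (t (Fin.natAdd L i) - t (Fin.natAdd L j))) *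
      ∏ k, ∏ m ∈ univ.erase k, (t (Fin.castAdd L k) - t (Fin.natAdd L m)) := by
  set a : Fin L → R := fun m => t (Fin.castAdd L m) with ha
  set b : Fin L → R := fun m => t (Fin.natAdd L m) with hb
  set P : Fin L → R[X] := fun k =>
    (∏ m ∈ univ.erase k, (X - C (a m))) * ∏ m ∈ univ.erase k, (X - C (b m)) with hP
  set Q : Fin L → R[X] := fun k =>
    (∏ m, (X - C (a m))) * ∏ m ∈ univ.erase k, (X - C (b m)) with hQ
  set M : Matrix (Fin (L + L)) (Fin (L + L)) R :=
    Matrix.of fun (j col : Fin (L + L)) =>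
      (Fin.addCases (motive := fun _ => R[X]) P Q col).coeff (j : ℕ) with hM
  have hcard' : ∀ k : Fin L, (univ.erase k).card = L - 1 := by
    intro k
    rw [Finset.card_erase_of_mem (Finset.mem_univ k)]
    simp
  have hmonicE : ∀ (c : Fin L → R) (s : Finset (Fin L)),
      (∏ m ∈ s, (X - C (c m))).Monic :=
    fun c s => monic_prod_of_monic _ _ fun m _ => monic_X_sub_C _
  have hdegE : ∀ (c : Fin L → R) (s : Finset (Fin L)),
      (∏ m ∈ s, (X - C (c m))).natDegree = s.card := by
    intro c s
    rw [natDegree_prod_of_monic _ _ fun m _ => monic_X_sub_C _]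
    simp
  have hPdeg : ∀ k, (P k).natDegree < L + L := by
    intro k
    rw [hP]
    rw [Monic.natDegree_mul (hmonicE a _) (hmonicE b _), hdegE, hdegE, hcard' k]
    omega
  have hQdeg : ∀ k, (Q k).natDegree < L + L := by
    intro k
    rw [hQ]
    rw [Monic.natDegree_mul (hmonicE a _) (hmonicE b _), hdegE, hdegE, hcard' k]
    simp only [Finset.card_univ, Fintype.card_fin]
    omega
  have hevalP : ∀ (y : R) (k : Fin L), (P k).eval y =
      (∏ m ∈ univ.erase k, (y - a m)) * ∏ m ∈ univ.erase k, (y - b m) := by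
    intro y k; simp [hP, eval_prod]
  have hevalQ : ∀ (y : R) (k : Fin L), (Q k).eval y =
      (∏ m, (y - a m)) * ∏ m ∈ univ.erase k, (y - b m) := by
    intro y k; simp [hQ, eval_prod]
  set α : Fin L → R := fun k =>
    (∏ m ∈ univ.erase k, (a k - a m)) * ∏ m ∈ univ.erase k, (a k - b m) with hα
  set γ : Fin L → R := fun k =>
    (∏ m, (b k - a m)) * ∏ m ∈ univ.erase k, (b k - b m) with hγ
  set B : Matrix (Fin L) (Fin L) R := Matrix.of fun i k => (P k).eval (b i) with hB
  have hVM : Matrix.vandermonde t * M =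
      (Matrix.fromBlocks (Matrix.diagonal α) 0 B (Matrix.diagonal γ)).submatrix
        finSumFinEquiv.symm finSumFinEquiv.symm := by
    ext i col
    have hentry : (Matrix.vandermonde t * M) i col =
        (Fin.addCases (motive := fun _ => R[X]) P Q col).eval (t i) := by
      rw [Matrix.mul_apply]
      have hdeg : (Fin.addCases (motive := fun _ => R[X]) P Q col).natDegree < L + L := by
        induction col using Fin.addCases with
        | left k => rw [Fin.addCases_left]; exact hPdeg k
        | right k => rw [Fin.addCases_right]; exact hQdeg k
      rw [eval_eq_sum_range' hdeg, ← Fin.sum_univ_eq_sum_range]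
      refine Finset.sum_congr rfl fun j _ => ?_
      rw [Matrix.vandermonde_apply, hM]
      simp [mul_comm]
    rw [hentry]
    induction i using Fin.addCases with
    | left i0 =>
      simp only [Matrix.submatrix_apply, finSumFinEquiv_symm_apply_castAdd]
      induction col using Fin.addCases with
      | left k =>
        rw [Fin.addCases_left, finSumFinEquiv_symm_apply_castAdd, Matrix.fromBlocks_apply₁₁]
        rcases eq_or_ne i0 k with rfl | hne
        · rw [Matrix.diagonal_apply_eq, hevalP]
        · rw [Matrix.diagonal_apply_ne _ hne, hevalP]
          rw [Finset.prod_eq_zero (Finset.mem_erase.2 ⟨hne, Finset.mem_univ i0⟩) (sub_self (a i0)),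
            zero_mul]
      | right k =>
        rw [Fin.addCases_right, finSumFinEquiv_symm_apply_natAdd, Matrix.fromBlocks_apply₁₂]
        rw [hevalQ, Finset.prod_eq_zero (Finset.mem_univ i0) (sub_self (a i0)), zero_mul]
        rfl
    | right i0 =>
      simp only [Matrix.submatrix_apply, finSumFinEquiv_symm_apply_natAdd]
      induction col using Fin.addCases with
      | left k =>
        rw [Fin.addCases_left, finSumFinEquiv_symm_apply_castAdd, Matrix.fromBlocks_apply₂₁]
        rfl
      | right k =>
        rw [Fin.addCases_right, finSumFinEquiv_symm_apply_natAdd, Matrix.fromBlocks_apply₂₂]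
        rcases eq_or_ne i0 k with rfl | hne
        · rw [Matrix.diagonal_apply_eq, hevalQ]
        · rw [Matrix.diagonal_apply_ne _ hne, hevalQ]
          rw [Finset.prod_eq_zero (Finset.mem_erase.2 ⟨hne, Finset.mem_univ i0⟩) (sub_self (b i0)),
            mul_zero]
  have hdetV : (Matrix.vandermonde t).det ≠ 0 := by
    rw [Matrix.det_vandermonde]
    refine Finset.prod_ne_zero_iff.2 fun i _ => Finset.prod_ne_zero_iff.2 fun j hj => ?_
    rw [sub_ne_zero]
    intro h
    exact absurd (hinj h) (ne_of_gt (Finset.mem_Ioi.1 hj))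
  apply mul_left_cancel₀ hdetV
  rw [← Matrix.det_mul, hVM, Matrix.det_submatrix_equiv_self, Matrix.det_fromBlocks_zero₁₂,
    Matrix.det_diagonal, Matrix.det_diagonal, Matrix.det_vandermonde, vandermonde_split t]
  simp only [hα, hγ]
  rw [Finset.prod_mul_distrib, Finset.prod_mul_distrib]
  rw [prod_erase_eq (f := fun k m => a k - a m), prod_erase_eq (f := fun k m => b k - b m)]
  rw [show (∏ k, ∏ m, (b k - a m)) = ∏ k, ∏ m, (b m - a k) from Finset.prod_comm]
  ring

lemma det_coeff_matrix_complex {L : ℕ} (hL : 0 < L) (a b : Fin L → ℂ) :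
    (Matrix.of fun (j col : Fin (L + L)) =>
      (Fin.addCases (motive := fun _ => ℂ[X])
        (fun k => (∏ m ∈ univ.erase k, (X - C (a m))) *
          ∏ m ∈ univ.erase k, (X - C (b m)))
        (fun k => (∏ m, (X - C (a m))) *
          ∏ m ∈ univ.erase k, (X - C (b m))) col).coeff (j : ℕ)).det
    = (∏ i, ∏ j ∈ Ioi i, (a i - a j)) * (∏ i, ∏ j ∈ Ioi i, (b i - b j)) *
      ∏ k, ∏ m ∈ univ.erase k, (a k - b m) := by
  set s : Fin (L + L) → ℂ := fun i => Fin.addCases (motive := fun _ => ℂ) a b i with hs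
  set t : Fin (L + L) → ℂ[X] := fun i => C (s i) + C ((i : ℕ) : ℂ) * X with ht
  have hta : ∀ m : Fin L, t (Fin.castAdd L m) = C (a m) + C ((Fin.castAdd L m : ℕ) : ℂ) * X := by
    intro m; rw [ht]; simp only [hs, Fin.addCases_left]
  have htb : ∀ m : Fin L, t (Fin.natAdd L m) = C (b m) + C ((Fin.natAdd L m : ℕ) : ℂ) * X := by
    intro m; rw [ht]; simp only [hs, Fin.addCases_right]
  have hcoeff1 : ∀ i : Fin (L + L), (t i).coeff 1 = ((i : ℕ) : ℂ) := by
    intro i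
    rw [ht]
    simp [coeff_C]
  have hinj : Function.Injective t := by
    intro i j hij
    have h1 : ((i : ℕ) : ℂ) = ((j : ℕ) : ℂ) := by
      rw [← hcoeff1 i, ← hcoeff1 j, hij]
    exact Fin.ext (Nat.cast_injective h1)
  have key := det_coeff_matrix hL t hinj
  have hφ : ∀ i : Fin (L + L), Polynomial.eval 0 (t i) = s i := by
    intro i; rw [ht]; simp
  set φ : ℂ[X] →+* ℂ := Polynomial.evalRingHom 0 with hφdef
  have hφa : ∀ m, φ (t (Fin.castAdd L m)) = a m := by
    intro m
    have h := hφ (Fin.castAdd L m)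
    rw [hs] at h
    simp only [Fin.addCases_left] at h
    exact h
  have hφb : ∀ m, φ (t (Fin.natAdd L m)) = b m := by
    intro m
    have h := hφ (Fin.natAdd L m)
    rw [hs] at h
    simp only [Fin.addCases_right] at h
    exact h
  have hmap := congrArg φ key
  rw [RingHom.map_det, RingHom.mapMatrix_apply] at hmap
  -- simplify RHS of hmap
  simp only [map_mul, map_prod, map_sub, hφa, hφb] at hmap
  -- now show the mapped matrix equals ours
  have hM : (Matrix.of fun (j col : Fin (L + L)) =>
      (Fin.addCases (motive := fun _ => (ℂ[X])[X])
        (fun k => (∏ m ∈ univ.erase k, (X - C (t (Fin.castAdd L m)))) *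
          ∏ m ∈ univ.erase k, (X - C (t (Fin.natAdd L m))))
        (fun k => (∏ m, (X - C (t (Fin.castAdd L m)))) *
          ∏ m ∈ univ.erase k, (X - C (t (Fin.natAdd L m)))) col).coeff (j : ℕ)).map φ
      = Matrix.of fun (j col : Fin (L + L)) =>
      (Fin.addCases (motive := fun _ => ℂ[X])
        (fun k => (∏ m ∈ univ.erase k, (X - C (a m))) *
          ∏ m ∈ univ.erase k, (X - C (b m)))
        (fun k => (∏ m, (X - C (a m))) *
          ∏ m ∈ univ.erase k, (X - C (b m))) col).coeff (j : ℕ) := by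
    ext j col
    rw [Matrix.map_apply]
    induction col using Fin.addCases with
    | left k =>
      rw [Matrix.of_apply, Matrix.of_apply, Fin.addCases_left, Fin.addCases_left,
        ← Polynomial.coeff_map]
      congr 1
      simp only [Polynomial.map_mul, Polynomial.map_prod, Polynomial.map_sub,
        Polynomial.map_X, Polynomial.map_C, hφa, hφb]
    | right k =>
      rw [Matrix.of_apply, Matrix.of_apply, Fin.addCases_right, Fin.addCases_right,
        ← Polynomial.coeff_map]
      congr 1
      simp only [Polynomial.map_mul, Polynomial.map_prod, Polynomial.map_sub,
        Polynomial.map_X, Polynomial.map_C, hφa, hφb]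
  rw [hM] at hmap
  exact hmap

lemma sigma_surjective : Function.Surjective ς := by
  intro c
  obtain ⟨z, hz⟩ := IsAlgClosed.exists_pow_nat_eq ((2*c)^2 - 1) (n := 2) two_pos
  set u : ℂ := 2*c + z with hu
  have hquad : u^2 + 1 = 2*(2*c)*u := by
    rw [hu]
    linear_combination hz
  have hune : u ≠ 0 := by
    intro h
    rw [h] at hquad
    simp at hquad
  refine ⟨Complex.log u / 2, ?_⟩
  have hexp : Complex.exp (Complex.log u) = u := Complex.exp_log hune
  have hexpneg : Complex.exp (-Complex.log u) = u⁻¹ := by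
    rw [Complex.exp_neg, hexp]
  unfold ς
  rw [show 2 * (Complex.log u / 2) = Complex.log u by ring]
  rw [Complex.cosh, hexp, hexpneg]
  field_simp
  linear_combination hquad

lemma sigma_sub_sigma (z w : ℂ) : ς z - ς w = Complex.sinh z ^ 2 - Complex.sinh w ^ 2 := by
  unfold ς
  rw [Complex.cosh_two_mul, Complex.cosh_two_mul, Complex.cosh_sq, Complex.cosh_sq]
  ring

/-- determination of a coefficient vector from the evaluation identity -/

lemma coeff_determined {n : ℕ} (p : ℂ[X]) (c : Fin n → ℂ)
    (h : ∀ r : ℂ, p.eval r = ∑ j : Fin n, c j * r ^ (j : ℕ)) (j : Fin n) :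
    c j = p.coeff (j : ℕ) := by
  have hp : p = ∑ j : Fin n, C (c j) * X ^ (j : ℕ) := by
    apply Polynomial.funext
    intro r
    rw [h r]
    rw [Polynomial.eval_finset_sum]
    refine Finset.sum_congr rfl fun j _ => by simp
  rw [hp, Polynomial.finset_sum_coeff]
  simp only [Polynomial.coeff_C_mul, Polynomial.coeff_X_pow, mul_ite, mul_one, mul_zero,
    Fin.val_inj]
  rw [Finset.sum_ite_eq univ j (fun j' => c j'), if_pos (Finset.mem_univ j)]

/-- Determinant of the auxiliary `2L×2L` coefficient matrix `D̃` defined by the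
ς-polynomial expansions
`X_k⁽⁺⁾(λ) X_k⁽⁻⁾(λ) = Σ_j D̃_{j,k} ς(λ)^{j−1}` (for the first `L` columns) and
`X⁽⁺⁾(λ) X_k⁽⁻⁾(λ) = Σ_j D̃_{j,L+k} ς(λ)^{j−1}` (for the last `L` columns), where
`X⁽^±⁾(λ) = ∏_ℓ (ς(λ) − ς(x_ℓ ± η/2))` and `X_k⁽^±⁾` omits the factor `ℓ = k`:
`det D̃ = V̂(x_L+η/2,…,x_1+η/2) · V̂(x_L−η/2,…,x_1−η/2) · ∏_k X_k⁽⁻⁾(x_k+η/2)`. -/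
theorem det_auxiliary_Dtilde (L : ℕ) (x : Fin L → ℂ) (η : ℂ)
    (D : Matrix (Fin (L + L)) (Fin (L + L)) ℂ)
    (hD1 : ∀ k : Fin L, ∀ lam : ℂ,
      (∏ m ∈ Finset.univ.erase k, (ς lam - ς (x m + η / 2))) *
        (∏ m ∈ Finset.univ.erase k, (ς lam - ς (x m - η / 2))) =
      ∑ j, D j (Fin.castAdd L k) * ς lam ^ (j : ℕ))
    (hD2 : ∀ k : Fin L, ∀ lam : ℂ,
      (∏ m, (ς lam - ς (x m + η / 2))) *
        (∏ m ∈ Finset.univ.erase k, (ς lam - ς (x m - η / 2))) =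
      ∑ j, D j (Fin.natAdd L k) * ς lam ^ (j : ℕ)) :
    D.det =
      (∏ p ∈ Finset.univ.filter (fun p : Fin L × Fin L => p.1 < p.2),
          (Complex.sinh (x p.1 + η / 2) ^ 2 - Complex.sinh (x p.2 + η / 2) ^ 2)) *
        (∏ p ∈ Finset.univ.filter (fun p : Fin L × Fin L => p.1 < p.2),
          (Complex.sinh (x p.1 - η / 2) ^ 2 - Complex.sinh (x p.2 - η / 2) ^ 2)) *
        ∏ k, ∏ m ∈ Finset.univ.erase k, (ς (x k + η / 2) - ς (x m - η / 2)) := by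
  set a : Fin L → ℂ := fun m => ς (x m + η / 2) with ha
  set b : Fin L → ℂ := fun m => ς (x m - η / 2) with hb
  rcases Nat.eq_zero_or_pos L with rfl | hL
  · rw [Matrix.det_eq_one_of_card_eq_zero (by simp)]
    simp
  -- evaluation of the column polynomials
  have hevP : ∀ (k : Fin L) (r : ℂ),
      ((∏ m ∈ univ.erase k, (X - C (a m))) * ∏ m ∈ univ.erase k, (X - C (b m))).eval r
        = (∏ m ∈ univ.erase k, (r - a m)) * ∏ m ∈ univ.erase k, (r - b m) := by
    intro k r; simp [eval_prod]
  have hevQ : ∀ (k : Fin L) (r : ℂ),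
      ((∏ m, (X - C (a m))) * ∏ m ∈ univ.erase k, (X - C (b m))).eval r
        = (∏ m, (r - a m)) * ∏ m ∈ univ.erase k, (r - b m) := by
    intro k r; simp [eval_prod]
  have hDeq : D = Matrix.of fun (j col : Fin (L + L)) =>
      (Fin.addCases (motive := fun _ => ℂ[X])
        (fun k => (∏ m ∈ univ.erase k, (X - C (a m))) *
          ∏ m ∈ univ.erase k, (X - C (b m)))
        (fun k => (∏ m, (X - C (a m))) *
          ∏ m ∈ univ.erase k, (X - C (b m))) col).coeff (j : ℕ) := by
    ext j col
    induction col using Fin.addCases with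
    | left k =>
      rw [Matrix.of_apply, Fin.addCases_left]
      have h : ∀ r : ℂ,
          ((∏ m ∈ univ.erase k, (X - C (a m))) * ∏ m ∈ univ.erase k, (X - C (b m))).eval r
            = ∑ j : Fin (L + L), D j (Fin.castAdd L k) * r ^ (j : ℕ) := by
        intro r
        obtain ⟨lam, rfl⟩ := sigma_surjective r
        rw [hevP]
        exact hD1 k lam
      exact coeff_determined _ _ h j
    | right k =>
      rw [Matrix.of_apply, Fin.addCases_right]
      have h : ∀ r : ℂ,
          ((∏ m, (X - C (a m))) * ∏ m ∈ univ.erase k, (X - C (b m))).eval r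
            = ∑ j : Fin (L + L), D j (Fin.natAdd L k) * r ^ (j : ℕ) := by
        intro r
        obtain ⟨lam, rfl⟩ := sigma_surjective r
        rw [hevQ]
        exact hD2 k lam
      exact coeff_determined _ _ h j
  rw [hDeq, det_coeff_matrix_complex hL a b]
  rw [prod_pairs_eq (f := fun i j => Complex.sinh (x i + η / 2) ^ 2 - Complex.sinh (x j + η / 2) ^ 2),
    prod_pairs_eq (f := fun i j => Complex.sinh (x i - η / 2) ^ 2 - Complex.sinh (x j - η / 2) ^ 2)]
  have h1 : (∏ i, ∏ j ∈ Ioi i, (a i - a j))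
      = ∏ i, ∏ j ∈ Ioi i, (Complex.sinh (x i + η / 2) ^ 2 - Complex.sinh (x j + η / 2) ^ 2) :=
    Finset.prod_congr rfl fun i _ => Finset.prod_congr rfl fun j _ => sigma_sub_sigma _ _
  have h2 : (∏ i, ∏ j ∈ Ioi i, (b i - b j))
      = ∏ i, ∏ j ∈ Ioi i, (Complex.sinh (x i - η / 2) ^ 2 - Complex.sinh (x j - η / 2) ^ 2) :=
    Finset.prod_congr rfl fun i _ => Finset.prod_congr rfl fun j _ => sigma_sub_sigma _ _
  rw [h1, h2]
end
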